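/- Let G = (V, E) be an undirected graph and let C be the labeling produced by contracting a single connected subgraph K of G to its minimum-ID vertex m = min K, while every vertex outside K is labeled by its own ID; assume m is strictly smaller than the ID of every vertex not in K. Then in any min-based label update process on G (where a vertex's label may only decrease, and each update propagates a label across an edge or along a parent pointer), no vertex of K ever changes its label, and hence edges directed out of vertices in K need never be processed for the algorithm to compute a correct connectivity labeling, provided edges into K are still processed from their other endpoint. -/
import Mathlib


open scoped Classical in
/-- Contract a connected subgraph `K` of `G` to its minimum-ID vertex `m`
(with `m` strictly smaller than the ID of every vertex not in `K`), labeling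
every other vertex by its own ID.  In any min-based label update process
(labels only decrease, and each new label originates from the label of some
vertex in the same connected component), no vertex of `K` ever changes its
label. -/
theorem contracted_component_labels_stable {V : Type*} [LinearOrder V]
    (G : SimpleGraph V) (K : Set V)
    (hKconn : (G.induce K).Connected)
    (m : V) (hm : m ∈ K) (hmin : ∀ v, v ∉ K → m < v)
    (L : ℕ → V → V)
    (h0 : ∀ v, L 0 v = if v ∈ K then m else v)
    (hprop : ∀ t v, ∃ w, G.Reachable w v ∧ L (t+1) v = L t w)
    (hmono : ∀ t v, L (t+1) v ≤ L t v) :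
    ∀ t, ∀ v ∈ K, L t v = m := by
  have hlow : ∀ t v, m ≤ L t v := by
    intro t
    induction t with
    | zero =>
      intro v
      rw [h0]
      split
      · exact le_rfl
      · exact (hmin v (by assumption)).le
    | succ t ih =>
      intro v
      obtain ⟨w, _, hw⟩ := hprop t v
      rw [hw]; exact ih w
  have hup : ∀ t, ∀ v ∈ K, L t v ≤ m := by
    intro t
    induction t with
    | zero => intro v hv; rw [h0, if_pos hv]
    | succ t ih => intro v hv; exact (hmono t v).trans (ih v hv)
  intro t v hv
  exact le_antisymm (hup t v hv) (hlow t v)
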